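/- Let β > 1 and τ > 0. There is a constant C(β, τ) > 0 such that for every r > 0 the surface integral over the sphere ∂B_r = {x ∈ ℝ³ : |x| = r} satisfies ∫_{∂B_r} s_τ(x)^{-β} do_x ≤ C(β, τ) · r. -/

import Mathlib

open MeasureTheory

noncomputable def sTau (τ : ℝ) (x : EuclideanSpace ℝ (Fin 3)) : ℝ := 1 + τ * (‖x‖ - x 0)

open Set
open scoped NNReal ENNReal

private abbrev E3 := EuclideanSpace ℝ (Fin 3)


lemma sphere_sum (x : E3) {r : ℝ} (hx : x ∈ Metric.sphere (0 : E3) r) :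
    ∑ j, (x j)^2 = r^2 := by
  rw [mem_sphere_zero_iff_norm] at hx
  have h := EuclideanSpace.norm_eq x
  rw [hx] at h
  have : r^2 = (Real.sqrt (∑ j, ‖x j‖^2))^2 := by rw [← h]
  rw [Real.sq_sqrt (by positivity)] at this
  simpa [Real.norm_eq_abs, sq_abs] using this.symm

lemma fin2cases (j : Fin 2) : j = 0 ∨ j = 1 := by fin_cases j <;> simp

set_option maxHeartbeats 1000000 in
lemma zone_bound (r t : ℝ) (hr : 0 < r) (ht : 0 < t) (htr : t ≤ r) (i : Fin 3) (σ : ℝ)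
    (hσ : σ = 1 ∨ σ = -1) :
    μH[2] {x : E3 | x ∈ Metric.sphere (0 : E3) r ∧ t ≤ σ * x i} ≤
      ENNReal.ofReal (36 * r^2 / t^2 * (r^2 - t^2)) := by
  have hσabs : |σ| = 1 := by rcases hσ with h | h <;> simp [h]
  have hσsq : σ * σ = 1 := by rcases hσ with h | h <;> simp [h] <;> ring
  set f : (Fin 2 → ℝ) → ℝ := fun p => σ * Real.sqrt (r^2 - ((p 0)^2 + (p 1)^2)) with hf
  set G : (Fin 2 → ℝ) → E3 :=
    fun p => (WithLp.equiv 2 (Fin 3 → ℝ)).symm (i.insertNth (f p) p) with hG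
  set S2 : Set (Fin 2 → ℝ) := {p | (p 0)^2 + (p 1)^2 ≤ r^2 - t^2} with hS2
  have hGapp : ∀ p j, G p j = i.insertNth (α := fun _ => ℝ) (f p) p j := by
    intro p j; rfl
  set ρ := Real.sqrt (r^2 - t^2) with hρ
  have hrt2 : (0:ℝ) ≤ r^2 - t^2 := by nlinarith
  have hρ2 : ρ^2 = r^2 - t^2 := Real.sq_sqrt hrt2
  -- Lipschitz bound
  have hlip : LipschitzOnWith (Real.toNNReal (3 * r / t)) G S2 := by
    rw [lipschitzOnWith_iff_dist_le_mul]
    intro p hp q hq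
    rw [hS2, mem_setOf_eq] at hp hq
    have hpd : ∀ j, |p j - q j| ≤ dist p q := by
      intro j
      have := dist_le_pi_dist p q j
      rwa [Real.dist_eq] at this
    have hpj : ∀ j : Fin 2, |p j| ≤ ρ := by
      intro j
      have h1 : (p j)^2 ≤ r^2 - t^2 := by
        rcases fin2cases j with h | h <;> subst h <;>
          nlinarith [sq_nonneg (p 0), sq_nonneg (p 1)]
      calc |p j| = Real.sqrt ((p j)^2) := (Real.sqrt_sq_eq_abs _).symm
        _ ≤ ρ := Real.sqrt_le_sqrt h1
    have hqj : ∀ j : Fin 2, |q j| ≤ ρ := by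
      intro j
      have h1 : (q j)^2 ≤ r^2 - t^2 := by
        rcases fin2cases j with h | h <;> subst h <;>
          nlinarith [sq_nonneg (q 0), sq_nonneg (q 1)]
      calc |q j| = Real.sqrt ((q j)^2) := (Real.sqrt_sq_eq_abs _).symm
        _ ≤ ρ := Real.sqrt_le_sqrt h1
    -- bound |f p - f q|
    have hfd : |f p - f q| ≤ 2 * ρ / t * dist p q := by
      set A := r^2 - ((p 0)^2 + (p 1)^2) with hA'
      set B := r^2 - ((q 0)^2 + (q 1)^2) with hB'
      have hA : t^2 ≤ A := by rw [hA']; nlinarith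
      have hB : t^2 ≤ B := by rw [hB']; nlinarith
      have hA0 : (0:ℝ) ≤ A := le_trans (by positivity) hA
      have hB0 : (0:ℝ) ≤ B := le_trans (by positivity) hB
      have hsA : t ≤ Real.sqrt A := by
        rw [show t = Real.sqrt (t^2) by rw [Real.sqrt_sq ht.le]]
        exact Real.sqrt_le_sqrt hA
      have hsB : t ≤ Real.sqrt B := by
        rw [show t = Real.sqrt (t^2) by rw [Real.sqrt_sq ht.le]]
        exact Real.sqrt_le_sqrt hB
      have hfpq : f p - f q = σ * (Real.sqrt A - Real.sqrt B) := by rw [hf]; ring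
      have key : |Real.sqrt A - Real.sqrt B| * (2 * t) ≤ |A - B| := by
        have h2 : (Real.sqrt A - Real.sqrt B) * (Real.sqrt A + Real.sqrt B) = A - B := by
          have := Real.sq_sqrt hA0; have := Real.sq_sqrt hB0; nlinarith
        have h3 : |A - B| = |Real.sqrt A - Real.sqrt B| * (Real.sqrt A + Real.sqrt B) := by
          rw [← h2, abs_mul,
            abs_of_nonneg (show (0:ℝ) ≤ Real.sqrt A + Real.sqrt B by linarith)]
        rw [h3]
        have : 2 * t ≤ Real.sqrt A + Real.sqrt B := by linarith
        exact mul_le_mul_of_nonneg_left this (abs_nonneg _)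
      have hAB : |A - B| ≤ 4 * ρ * dist p q := by
        have e1 : A - B = (q 0 + p 0) * (q 0 - p 0) + (q 1 + p 1) * (q 1 - p 1) := by
          rw [hA', hB']; ring
        have b0 : |(q 0 + p 0) * (q 0 - p 0)| ≤ 2 * ρ * dist p q := by
          rw [abs_mul]
          have h1 : |q 0 + p 0| ≤ 2 * ρ := by
            calc |q 0 + p 0| ≤ |q 0| + |p 0| := abs_add_le _ _
              _ ≤ 2 * ρ := by have := hpj 0; have := hqj 0; linarith
          have h2 : |q 0 - p 0| ≤ dist p q := by rw [abs_sub_comm]; exact hpd 0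
          exact mul_le_mul h1 h2 (abs_nonneg _) (by positivity)
        have b1 : |(q 1 + p 1) * (q 1 - p 1)| ≤ 2 * ρ * dist p q := by
          rw [abs_mul]
          have h1 : |q 1 + p 1| ≤ 2 * ρ := by
            calc |q 1 + p 1| ≤ |q 1| + |p 1| := abs_add_le _ _
              _ ≤ 2 * ρ := by have := hpj 1; have := hqj 1; linarith
          have h2 : |q 1 - p 1| ≤ dist p q := by rw [abs_sub_comm]; exact hpd 1
          exact mul_le_mul h1 h2 (abs_nonneg _) (by positivity)
        calc |A - B| ≤ |(q 0 + p 0) * (q 0 - p 0)| + |(q 1 + p 1) * (q 1 - p 1)| := by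
              rw [e1]; exact abs_add_le _ _
          _ ≤ 4 * ρ * dist p q := by linarith
      rw [hfpq, abs_mul, hσabs, one_mul]
      rw [div_mul_eq_mul_div, le_div_iff₀ ht]
      calc |Real.sqrt A - Real.sqrt B| * t
          = |Real.sqrt A - Real.sqrt B| * (2*t) / 2 := by ring
        _ ≤ |A - B| / 2 := by linarith [key]
        _ ≤ 4 * ρ * dist p q / 2 := by linarith [hAB]
        _ = 2 * ρ * dist p q := by ring
    -- now total distance
    have hsum : ∑ j, dist (G p j) (G q j)^2
        = dist (f p) (f q)^2 + ∑ j : Fin 2, dist (p j) (q j)^2 := by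
      rw [Fin.sum_univ_succAbove (fun j => dist (G p j) (G q j)^2) i]
      congr 1
      · rw [hGapp, hGapp, Fin.insertNth_apply_same, Fin.insertNth_apply_same]
      · apply Finset.sum_congr rfl
        intro j _
        rw [hGapp, hGapp, Fin.insertNth_apply_succAbove, Fin.insertNth_apply_succAbove]
    have hdist : dist (G p) (G q) ≤ 3 * r / t * dist p q := by
      rw [EuclideanSpace.dist_eq, hsum]
      have hd0 : (0:ℝ) ≤ dist p q := dist_nonneg
      have hbound : dist (f p) (f q)^2 + ∑ j : Fin 2, dist (p j) (q j)^2
          ≤ (3 * r / t * dist p q)^2 := by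
        have h1 : dist (f p) (f q)^2 ≤ (2 * ρ / t * dist p q)^2 := by
          rw [Real.dist_eq]
          have h2r : (0:ℝ) ≤ 2 * ρ / t * dist p q := by positivity
          nlinarith [hfd, abs_nonneg (f p - f q)]
        have h2 : ∑ j : Fin 2, dist (p j) (q j)^2 ≤ 2 * dist p q^2 := by
          rw [Fin.sum_univ_two]
          have a0 := hpd 0; have a1 := hpd 1
          rw [Real.dist_eq, Real.dist_eq]
          nlinarith [abs_nonneg (p 0 - q 0), abs_nonneg (p 1 - q 1)]
        have e1 : (2 * ρ / t * dist p q)^2 = 4*ρ^2*(dist p q)^2/t^2 := by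
          field_simp; ring
        have e2 : (3 * r / t * dist p q)^2 = 9*r^2*(dist p q)^2/t^2 := by
          field_simp; ring
        have e3 : (2:ℝ) * dist p q^2 = 2*(dist p q)^2*t^2/t^2 := by
          field_simp
        have main : (4*ρ^2*(dist p q)^2 + 2*(dist p q)^2*t^2)/t^2
            ≤ 9*r^2*(dist p q)^2/t^2 := by
          gcongr
          nlinarith [sq_nonneg (dist p q), sq_nonneg t, sq_nonneg r]
        calc dist (f p) (f q)^2 + ∑ j : Fin 2, dist (p j) (q j)^2
            ≤ (2 * ρ / t * dist p q)^2 + 2 * dist p q^2 := by linarith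
          _ = (4*ρ^2*(dist p q)^2 + 2*(dist p q)^2*t^2)/t^2 := by
              rw [e1, div_add' _ _ _ (pow_ne_zero 2 ht.ne')]
          _ ≤ 9*r^2*(dist p q)^2/t^2 := main
          _ = (3 * r / t * dist p q)^2 := e2.symm
      calc Real.sqrt (dist (f p) (f q)^2 + ∑ j : Fin 2, dist (p j) (q j)^2)
          ≤ Real.sqrt ((3 * r / t * dist p q)^2) := Real.sqrt_le_sqrt hbound
        _ = 3 * r / t * dist p q := Real.sqrt_sq (by positivity)
    calc dist (G p) (G q) ≤ 3 * r / t * dist p q := hdist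
      _ = (Real.toNNReal (3 * r / t) : ℝ) * dist p q := by
          rw [Real.coe_toNNReal _ (by positivity)]
  -- the zone is contained in the image of S2
  have hsub : {x : E3 | x ∈ Metric.sphere (0 : E3) r ∧ t ≤ σ * x i} ⊆ G '' S2 := by
    rintro x ⟨hxs, hxi⟩
    have hsum3 : ∑ j, (x j)^2 = r^2 := sphere_sum x hxs
    set p : Fin 2 → ℝ := fun j => x (i.succAbove j) with hp
    have hdecomp : (x i)^2 + ((p 0)^2 + (p 1)^2) = r^2 := by
      rw [← hsum3, Fin.sum_univ_succAbove (fun j => (x j)^2) i, Fin.sum_univ_two]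
    have hxi2 : t^2 ≤ (x i)^2 := by
      have h1 : t ≤ |x i| := by
        calc t ≤ σ * x i := hxi
          _ ≤ |σ * x i| := le_abs_self _
          _ = |x i| := by rw [abs_mul, hσabs, one_mul]
      calc t^2 ≤ |x i|^2 := by nlinarith [abs_nonneg (x i)]
        _ = (x i)^2 := sq_abs _
    refine ⟨p, ?_, ?_⟩
    · rw [hS2, mem_setOf_eq]; nlinarith
    · have h0 : 0 < σ * x i := lt_of_lt_of_le ht hxi
      have hfp : f p = x i := by
        rw [hf]
        have hxx : r^2 - ((p 0)^2 + (p 1)^2) = (x i)^2 := by linarith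
        simp only []
        rw [hxx, Real.sqrt_sq_eq_abs]
        have habs : |x i| = σ * x i := by
          rw [← abs_of_pos h0, abs_mul, hσabs, one_mul]
        rw [habs, ← mul_assoc, hσsq, one_mul]
      have hfun : i.insertNth (α := fun _ => ℝ) (f p) p = fun j => x j := by
        rw [hfp]
        exact Fin.insertNth_self_removeNth i (fun j => x j)
      exact congrArg (WithLp.equiv 2 (Fin 3 → ℝ)).symm hfun
  -- put the measure estimates together
  refine le_trans (measure_mono hsub) ?_
  refine le_trans (hlip.hausdorffMeasure_image_le (by norm_num : (0:ℝ) ≤ 2)) ?_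
  have hcard : (μH[2] : Measure (Fin 2 → ℝ)) = volume := by
    have h := MeasureTheory.hausdorffMeasure_pi_real (ι := Fin 2)
    simpa using h
  have hS2vol : μH[2] S2 ≤ ENNReal.ofReal (4 * (r^2 - t^2)) := by
    rw [hcard]
    have hsub2 : S2 ⊆ Set.pi Set.univ (fun _ : Fin 2 => Icc (-ρ) ρ) := by
      intro p hp j _
      rw [hS2, mem_setOf_eq] at hp
      have h1 : (p j)^2 ≤ r^2 - t^2 := by
        rcases fin2cases j with h | h <;> subst h <;>
          nlinarith [sq_nonneg (p 0), sq_nonneg (p 1)]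
      have h2 : |p j| ≤ ρ := by
        calc |p j| = Real.sqrt ((p j)^2) := (Real.sqrt_sq_eq_abs _).symm
          _ ≤ ρ := Real.sqrt_le_sqrt h1
      exact abs_le.mp h2
    refine le_trans (measure_mono hsub2) ?_
    rw [volume_pi_pi]
    simp only [Real.volume_Icc]
    have : ρ - -ρ = 2 * ρ := by ring
    rw [this, Finset.prod_const, Finset.card_univ, Fintype.card_fin,
      ← ENNReal.ofReal_pow (by positivity)]
    apply ENNReal.ofReal_le_ofReal
    nlinarith [hρ2, Real.sqrt_nonneg (r^2 - t^2)]
  have hK : ((Real.toNNReal (3 * r / t) : ℝ≥0) : ℝ≥0∞) ^ (2:ℝ)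
      = ENNReal.ofReal (9 * r^2 / t^2) := by
    rw [show ((Real.toNNReal (3 * r / t) : ℝ≥0) : ℝ≥0∞) = ENNReal.ofReal (3 * r / t) from rfl]
    rw [ENNReal.ofReal_rpow_of_pos (by positivity)]
    congr 1
    rw [show ((2:ℝ)) = ((2:ℕ):ℝ) by norm_num, Real.rpow_natCast]
    field_simp; ring
  calc (Real.toNNReal (3 * r / t) : ℝ≥0∞) ^ (2:ℝ) * μH[2] S2
      ≤ ENNReal.ofReal (9 * r^2 / t^2) * ENNReal.ofReal (4 * (r^2 - t^2)) := by
        rw [hK]; exact mul_le_mul_right hS2vol _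
    _ = ENNReal.ofReal (36 * r^2 / t^2 * (r^2 - t^2)) := by
        rw [← ENNReal.ofReal_mul (by positivity)]
        congr 1
        field_simp; ring



lemma fin3cases (j : Fin 3) : j = 0 ∨ j = 1 ∨ j = 2 := by fin_cases j <;> simp

lemma sphere_total (r : ℝ) (hr : 0 < r) :
    μH[2] (Metric.sphere (0 : E3) r) ≤ ENNReal.ofReal (648 * r^2) := by
  set Z : Fin 3 → ℝ → Set E3 :=
    fun i σ => {x : E3 | x ∈ Metric.sphere (0 : E3) r ∧ r/2 ≤ σ * x i} with hZ
  have hz : ∀ (i : Fin 3) (σ : ℝ), σ = 1 ∨ σ = -1 →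
      μH[2] (Z i σ) ≤ ENNReal.ofReal (108 * r^2) := by
    intro i σ hσ
    have h := zone_bound r (r/2) hr (by linarith) (by linarith) i σ hσ
    have he : 36 * r^2 / (r/2)^2 * (r^2 - (r/2)^2) = 108 * r^2 := by
      field_simp; ring
    rwa [he] at h
  have hcover : Metric.sphere (0 : E3) r ⊆
      Z 0 1 ∪ (Z 0 (-1) ∪ (Z 1 1 ∪ (Z 1 (-1) ∪ (Z 2 1 ∪ Z 2 (-1))))) := by
    intro x hx
    have hsum := sphere_sum x hx
    rw [Fin.sum_univ_three] at hsum
    have hex : ∃ j : Fin 3, r^2/4 ≤ (x j)^2 := by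
      by_contra h
      push_neg at h
      have h0 := h 0; have h1 := h 1; have h2 := h 2
      nlinarith
    obtain ⟨j, hj⟩ := hex
    have habs : r/2 ≤ |x j| := by
      rw [show |x j| = Real.sqrt ((x j)^2) from (Real.sqrt_sq_eq_abs _).symm]
      rw [show r/2 = Real.sqrt ((r/2)^2) from (Real.sqrt_sq (by linarith)).symm]
      apply Real.sqrt_le_sqrt
      nlinarith
    have hcases : r/2 ≤ 1 * x j ∨ r/2 ≤ (-1) * x j := by
      rcases le_or_gt 0 (x j) with h | h
      · left; rw [one_mul]; rwa [abs_of_nonneg h] at habs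
      · right; rw [neg_one_mul]; rwa [abs_of_neg h] at habs
    rcases fin3cases j with rfl | rfl | rfl
    · rcases hcases with h | h
      · exact Or.inl ⟨hx, h⟩
      · exact Or.inr (Or.inl ⟨hx, h⟩)
    · rcases hcases with h | h
      · exact Or.inr (Or.inr (Or.inl ⟨hx, h⟩))
      · exact Or.inr (Or.inr (Or.inr (Or.inl ⟨hx, h⟩)))
    · rcases hcases with h | h
      · exact Or.inr (Or.inr (Or.inr (Or.inr (Or.inl ⟨hx, h⟩))))
      · exact Or.inr (Or.inr (Or.inr (Or.inr (Or.inr ⟨hx, h⟩))))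
  refine le_trans (measure_mono hcover) ?_
  have c108 : (0:ℝ) ≤ 108 * r^2 := by positivity
  calc μH[2] (Z 0 1 ∪ (Z 0 (-1) ∪ (Z 1 1 ∪ (Z 1 (-1) ∪ (Z 2 1 ∪ Z 2 (-1))))))
      ≤ μH[2] (Z 0 1) + (μH[2] (Z 0 (-1)) + (μH[2] (Z 1 1)
        + (μH[2] (Z 1 (-1)) + (μH[2] (Z 2 1) + μH[2] (Z 2 (-1)))))) := by
        refine le_trans (measure_union_le _ _) ?_
        gcongr
        refine le_trans (measure_union_le _ _) ?_
        gcongr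
        refine le_trans (measure_union_le _ _) ?_
        gcongr
        refine le_trans (measure_union_le _ _) ?_
        gcongr
        exact measure_union_le _ _
    _ ≤ ENNReal.ofReal (108 * r^2) + (ENNReal.ofReal (108 * r^2) + (ENNReal.ofReal (108 * r^2)
        + (ENNReal.ofReal (108 * r^2) + (ENNReal.ofReal (108 * r^2) + ENNReal.ofReal (108 * r^2))))) := by
        gcongr <;> [exact hz 0 1 (Or.inl rfl); exact hz 0 (-1) (Or.inr rfl);
          exact hz 1 1 (Or.inl rfl); exact hz 1 (-1) (Or.inr rfl);
          exact hz 2 1 (Or.inl rfl); exact hz 2 (-1) (Or.inr rfl)]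
    _ = ENNReal.ofReal (648 * r^2) := by
        rw [← ENNReal.ofReal_add c108 c108, ← ENNReal.ofReal_add c108 (by positivity),
          ← ENNReal.ofReal_add c108 (by positivity), ← ENNReal.ofReal_add c108 (by positivity),
          ← ENNReal.ofReal_add c108 (by positivity)]
        congr 1; ring

lemma cap_bound (r s : ℝ) (hr : 0 < r) (hs : 0 < s) :
    μH[2] {x : E3 | x ∈ Metric.sphere (0 : E3) r ∧ r - x 0 ≤ s} ≤
      ENNReal.ofReal (2592 * r * s) := by
  rcases le_or_gt s (r/4) with h4 | h4
  · set t := r - s with hts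
    have ht : 0 < t := by rw [hts]; linarith
    have htr : t ≤ r := by rw [hts]; linarith
    have hsub : {x : E3 | x ∈ Metric.sphere (0 : E3) r ∧ r - x 0 ≤ s} ⊆
        {x : E3 | x ∈ Metric.sphere (0 : E3) r ∧ t ≤ 1 * x 0} := by
      rintro x ⟨hx, hxs⟩
      exact ⟨hx, by rw [one_mul]; rw [hts]; linarith⟩
    refine le_trans (measure_mono hsub) ?_
    refine le_trans (zone_bound r t hr ht htr 0 1 (Or.inl rfl)) ?_
    apply ENNReal.ofReal_le_ofReal
    have h34 : 3 * r / 4 ≤ t := by rw [hts]; linarith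
    have h1 : r^2 / t^2 ≤ 16/9 := by
      rw [div_le_div_iff₀ (by positivity) (by norm_num)]
      nlinarith
    have h2 : r^2 - t^2 ≤ 2 * r * s := by rw [hts]; nlinarith
    have h3 : (0:ℝ) ≤ r^2 - t^2 := by nlinarith
    calc 36 * r^2 / t^2 * (r^2 - t^2) = 36 * (r^2 / t^2) * (r^2 - t^2) := by ring
      _ ≤ 36 * (16/9) * (2 * r * s) := by
          apply mul_le_mul _ h2 h3 (by norm_num)
          nlinarith
      _ ≤ 2592 * r * s := by nlinarith
  · have hsub : {x : E3 | x ∈ Metric.sphere (0 : E3) r ∧ r - x 0 ≤ s} ⊆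
        Metric.sphere (0 : E3) r := fun x hx => hx.1
    refine le_trans (measure_mono hsub) (le_trans (sphere_total r hr) ?_)
    apply ENNReal.ofReal_le_ofReal
    nlinarith




lemma coord_le_norm (x : E3) : x 0 ≤ ‖x‖ := by
  rw [EuclideanSpace.norm_eq]
  calc x 0 ≤ |x 0| := le_abs_self _
    _ = Real.sqrt (‖x 0‖^2) := by rw [Real.norm_eq_abs, Real.sqrt_sq_eq_abs, abs_abs]
    _ ≤ Real.sqrt (∑ j, ‖x j‖^2) := by
        apply Real.sqrt_le_sqrt
        exact Finset.single_le_sum (f := fun j : Fin 3 => ‖x j‖^2)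
          (fun j _ => by positivity) (Finset.mem_univ 0)

lemma sTau_ge_one (τ : ℝ) (hτ : 0 < τ) (x : E3) : 1 ≤ sTau τ x := by
  have := coord_le_norm x
  have : 0 ≤ τ * (‖x‖ - x 0) := mul_nonneg hτ.le (by linarith)
  rw [sTau]; linarith

lemma continuous_proj0 : Continuous fun x : E3 => x 0 :=
  (EuclideanSpace.proj (𝕜 := ℝ) (0 : Fin 3)).continuous

set_option maxHeartbeats 1000000 in
theorem sphere_integral_sTau_le (β τ : ℝ) (hβ : 1 < β) (hτ : 0 < τ) :
    ∃ C : ℝ, 0 < C ∧ ∀ r : ℝ, 0 < r →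
      ∫ x in Metric.sphere (0 : EuclideanSpace ℝ (Fin 3)) r,
        (sTau τ x) ^ (-β) ∂(μH[2]) ≤ C * r := by
  set q0 : ℝ := (2:ℝ) ^ (-β) with hq0
  set qr : ℝ := (2:ℝ) ^ ((1:ℝ) - β) with hqr
  have hq0pos : 0 < q0 := Real.rpow_pos_of_pos (by norm_num) _
  have hqrpos : 0 < qr := Real.rpow_pos_of_pos (by norm_num) _
  have hqr1 : qr < 1 := Real.rpow_lt_one_of_one_lt_of_neg (by norm_num) (by linarith)
  have h2β : (0:ℝ) < (2:ℝ)^β := Real.rpow_pos_of_pos (by norm_num) _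
  have hqr2 : qr = 2 * q0 := by
    rw [hqr, hq0, show (1:ℝ) - β = 1 + (-β) by ring, Real.rpow_add (by norm_num),
      Real.rpow_one]
  set C : ℝ := 2592 * (2:ℝ)^β / τ * (1 - qr)⁻¹ with hC
  have hCpos : 0 < C := by
    apply mul_pos (by positivity)
    exact inv_pos.mpr (by linarith)
  refine ⟨C, hCpos, fun r hr => ?_⟩
  set S := Metric.sphere (0 : E3) r with hS
  have hSmeas : MeasurableSet S := Metric.isClosed_sphere.measurableSet
  set D : ℕ → Set E3 := fun k => {x : E3 | x ∈ S ∧ r - x 0 ≤ 2^k / τ} with hD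
  have hDmeas : ∀ k, MeasurableSet (D k) := by
    intro k
    have : D k = S ∩ {x : E3 | r - x 0 ≤ 2^k / τ} := rfl
    rw [this]
    exact hSmeas.inter ((isClosed_le (continuous_const.sub continuous_proj0)
      continuous_const).measurableSet)
  have hDsub : ∀ k, D k ⊆ S := fun k x hx => hx.1
  have hcoord : ∀ x : E3, x ∈ S → 0 ≤ r - x 0 := by
    intro x hx
    have h := coord_le_norm x
    rw [hS, mem_sphere_zero_iff_norm] at hx
    rw [hx] at h
    linarith
  have hsTau_eq : ∀ x : E3, x ∈ S → sTau τ x = 1 + τ * (r - x 0) := by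
    intro x hx
    rw [hS, mem_sphere_zero_iff_norm] at hx
    rw [sTau, hx]
  set b : ℕ → ℝ≥0∞ := fun k => ENNReal.ofReal ((2:ℝ)^β * q0^k) with hb
  -- pointwise domination
  have hpt : ∀ x ∈ S, ENNReal.ofReal ((sTau τ x) ^ (-β)) ≤
      ∑' k, (D k).indicator (fun _ => b k) x := by
    intro x hx
    have hu0 : 0 ≤ r - x 0 := hcoord x hx
    have hex : ∃ k : ℕ, r - x 0 ≤ 2^k / τ := by
      obtain ⟨n, hn⟩ := exists_nat_ge ((r - x 0) * τ)
      refine ⟨n, ?_⟩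
      rw [le_div_iff₀ hτ]
      calc (r - x 0) * τ ≤ n := hn
        _ ≤ 2^n := by
            have := (Nat.lt_two_pow_self (n := n)).le
            exact_mod_cast Nat.cast_le.mpr this
    set k0 := Nat.find hex with hk0def
    have hk0 : r - x 0 ≤ 2^k0 / τ := Nat.find_spec hex
    have hmem : x ∈ D k0 := ⟨hx, hk0⟩
    have hone : ENNReal.ofReal ((sTau τ x) ^ (-β)) ≤ b k0 := by
      have hst1 : 1 ≤ sTau τ x := sTau_ge_one τ hτ x
      rcases Nat.eq_zero_or_pos k0 with hz | hpos
      · rw [hz]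
        have h1 : (sTau τ x) ^ (-β) ≤ 1 :=
          Real.rpow_le_one_of_one_le_of_nonpos hst1 (by linarith)
        have h2 : (1:ℝ) ≤ (2:ℝ)^β * q0^(0:ℕ) := by
          rw [pow_zero, mul_one]
          have h3 : (2:ℝ)^(0:ℝ) ≤ (2:ℝ)^β :=
            Real.rpow_le_rpow_of_exponent_le (by norm_num) (by linarith)
          rwa [Real.rpow_zero] at h3
        exact ENNReal.ofReal_le_ofReal (h1.trans h2)
      · obtain ⟨m, hm⟩ : ∃ m, k0 = m + 1 := ⟨k0 - 1, by omega⟩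
        have hlt : ¬ (r - x 0 ≤ 2^m / τ) := by
          rw [hm] at hk0def
          exact Nat.find_min hex (by omega : m < k0)
        push_neg at hlt
        have h2m : (2:ℝ)^m < τ * (r - x 0) := by
          rw [div_lt_iff₀ hτ] at hlt
          linarith [hlt]
        have hstge : (2:ℝ)^m ≤ sTau τ x := by
          rw [hsTau_eq x hx]
          nlinarith
        have h2mpos : (0:ℝ) < 2^m := by positivity
        have h1 : (sTau τ x) ^ (-β) ≤ ((2:ℝ)^m) ^ (-β) :=
          Real.rpow_le_rpow_of_nonpos h2mpos hstge (by linarith)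
        have h2 : ((2:ℝ)^m) ^ (-β) ≤ (2:ℝ)^β * q0^k0 := by
          have e1 : ((2:ℝ)^m) ^ (-β) = (2:ℝ) ^ ((m:ℝ) * (-β)) := by
            rw [← Real.rpow_natCast 2 m, ← Real.rpow_mul (by norm_num)]
          have e2 : (2:ℝ)^β * q0^k0 = (2:ℝ) ^ (β + (-β) * (k0:ℝ)) := by
            rw [hq0, ← Real.rpow_natCast ((2:ℝ) ^ (-β)) k0, ← Real.rpow_mul (by norm_num),
              ← Real.rpow_add (by norm_num)]
          rw [e1, e2]
          apply Real.rpow_le_rpow_of_exponent_le (by norm_num)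
          rw [hm]; push_cast; nlinarith
        exact ENNReal.ofReal_le_ofReal (le_trans h1 h2)
    calc ENNReal.ofReal ((sTau τ x) ^ (-β)) ≤ b k0 := hone
      _ = (D k0).indicator (fun _ => b k0) x := by rw [Set.indicator_of_mem hmem]
      _ ≤ ∑' k, (D k).indicator (fun _ => b k) x :=
          ENNReal.le_tsum k0
  -- lintegral bound
  have hcap : ∀ k : ℕ, μH[2] (D k) ≤ ENNReal.ofReal (2592 * r * (2^k / τ)) := by
    intro k
    exact cap_bound r (2^k / τ) hr (by positivity)
  have hlint : ∫⁻ x in S, ENNReal.ofReal ((sTau τ x) ^ (-β)) ∂(μH[2]) ≤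
      ENNReal.ofReal (C * r) := by
    calc ∫⁻ x in S, ENNReal.ofReal ((sTau τ x) ^ (-β)) ∂(μH[2])
        ≤ ∫⁻ x in S, (∑' k, (D k).indicator (fun _ => b k) x) ∂(μH[2]) := by
          refine setLIntegral_mono (Measurable.ennreal_tsum ?_) hpt
          exact fun k => measurable_const.indicator (hDmeas k)
      _ = ∑' k, ∫⁻ x in S, (D k).indicator (fun _ => b k) x ∂(μH[2]) :=
          lintegral_tsum fun k => (measurable_const.indicator (hDmeas k)).aemeasurable
      _ = ∑' k, b k * μH[2] (D k) := by
          congr 1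
          funext k
          rw [lintegral_indicator (hDmeas k), setLIntegral_const,
            Measure.restrict_apply (hDmeas k), inter_eq_self_of_subset_left (hDsub k)]
      _ ≤ ∑' k, ENNReal.ofReal (2592 * (2:ℝ)^β / τ * r * qr^k) := by
          apply ENNReal.tsum_le_tsum
          intro k
          calc b k * μH[2] (D k) ≤ b k * ENNReal.ofReal (2592 * r * (2^k / τ)) :=
                mul_le_mul_right (hcap k) _
            _ = ENNReal.ofReal (2592 * (2:ℝ)^β / τ * r * qr^k) := by
                rw [hb, ← ENNReal.ofReal_mul (by positivity)]
                congr 1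
                rw [hqr2, mul_pow]
                field_simp
      _ = ENNReal.ofReal (2592 * (2:ℝ)^β / τ * r) * ∑' k, (ENNReal.ofReal qr)^k := by
          rw [← ENNReal.tsum_mul_left]
          congr 1
          funext k
          rw [← ENNReal.ofReal_pow hqrpos.le, ← ENNReal.ofReal_mul (by positivity)]
      _ = ENNReal.ofReal (2592 * (2:ℝ)^β / τ * r) * (1 - ENNReal.ofReal qr)⁻¹ := by
          rw [ENNReal.tsum_geometric]
      _ = ENNReal.ofReal (C * r) := by
          rw [show (1:ℝ≥0∞) - ENNReal.ofReal qr = ENNReal.ofReal (1 - qr) by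
            rw [ENNReal.ofReal_sub _ hqrpos.le, ENNReal.ofReal_one]]
          rw [← ENNReal.ofReal_inv_of_pos (by linarith), ← ENNReal.ofReal_mul (by positivity)]
          congr 1
          rw [hC]; ring
  -- Bochner conversion
  have hnn : 0 ≤ᵐ[(μH[2] : Measure E3).restrict S] fun x => (sTau τ x) ^ (-β) :=
    ae_of_all _ fun x => Real.rpow_nonneg (by linarith [sTau_ge_one τ hτ x]) _
  have hcont : Continuous fun x : E3 => (sTau τ x) ^ (-β) := by
    apply Continuous.rpow_const
    · exact continuous_const.add (continuous_const.mul (continuous_norm.sub continuous_proj0))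
    · intro x
      left
      have := sTau_ge_one τ hτ x
      have h := sTau_ge_one τ hτ x
      exact ne_of_gt (by linarith)
  have hmeasf : AEStronglyMeasurable (fun x => (sTau τ x) ^ (-β))
      ((μH[2] : Measure E3).restrict S) := hcont.aestronglyMeasurable
  rw [integral_eq_lintegral_of_nonneg_ae hnn hmeasf]
  calc (∫⁻ x in S, ENNReal.ofReal ((sTau τ x) ^ (-β)) ∂(μH[2])).toReal
      ≤ (ENNReal.ofReal (C * r)).toReal := by
        apply ENNReal.toReal_mono ENNReal.ofReal_ne_top hlint
    _ = C * r := ENNReal.toReal_ofReal (by positivity)
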